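/- Let ū ∈ U be a global minimizer of J(u) := (1/2)‖Ku − g^δ‖_G² + α‖u‖_{X*} over U. Then for every u ∈ U and every g ∈ G with ‖K*(g − g^δ)‖_X ≤ α: ‖Ku − Kū‖_G² ≤ 2(J(u) − J(ū)) ≤ 2α‖u‖_{X*} + 2·u(K*(g − g^δ)) + ‖Ku − g‖_G². -/

import Mathlib

open RealInnerProductSpace NormedSpace

set_option maxHeartbeats 2000000

/-- Functional error estimate for Banach space norm regularization
(reduced formulation with measure-space-type penalty α‖u‖_{X*}). -/
theorem stmt_13
    {X G : Type*}
    [NormedAddCommGroup X] [NormedSpace ℝ X] [CompleteSpace X]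
    [NormedAddCommGroup G] [InnerProductSpace ℝ G] [CompleteSpace G]
    (K : StrongDual ℝ X →L[ℝ] G) (Kstar : G →L[ℝ] X)
    (hadj : ∀ (u : StrongDual ℝ X) (g : G), ⟪K u, g⟫ = u (Kstar g))
    (gδ : G) (α : ℝ) (hα : 0 < α)
    (J : StrongDual ℝ X → ℝ)
    (hJ : ∀ u, J u = (1/2) * ‖K u - gδ‖^2 + α * ‖u‖)
    (ubar : StrongDual ℝ X) (hmin : ∀ u : StrongDual ℝ X, J ubar ≤ J u) :
    ∀ u : StrongDual ℝ X, ∀ g : G, ‖Kstar (g - gδ)‖ ≤ α →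
      ‖K u - K ubar‖^2 ≤ 2 * (J u - J ubar) ∧
      2 * (J u - J ubar) ≤
        2 * α * ‖u‖ + 2 * u (Kstar (g - gδ)) + ‖K u - g‖^2 := by
  intro u g hg
  set d : G := g - gδ with hd
  set a : G := K ubar - gδ with ha
  set b : G := K u - K ubar with hb
  have hKu : K u - gδ = a + b := by rw [ha, hb]; abel
  -- optimality gives the variational inequality
  have hc : 0 ≤ ⟪a, b⟫ + α * (‖u‖ - ‖ubar‖) := by
    set c : ℝ := ⟪a, b⟫ + α * (‖u‖ - ‖ubar‖) with hcdef
    have hstep : ∀ t : ℝ, 0 < t → t ≤ 1 → -c ≤ t * ‖b‖ ^ 2 / 2 := by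
      intro t ht ht1
      have hmin' := hmin (ubar + t • (u - ubar))
      have hKt : K (ubar + t • (u - ubar)) - gδ = a + t • b := by
        rw [ha, hb]
        simp only [map_add, map_smul, map_sub]
        abel
      have hnorm : ‖ubar + t • (u - ubar)‖ ≤ (1 - t) * ‖ubar‖ + t * ‖u‖ := by
        have heq : ubar + t • (u - ubar) = (1 - t) • ubar + t • u := by
          ext x; simp only [ContinuousLinearMap.add_apply, ContinuousLinearMap.smul_apply, ContinuousLinearMap.sub_apply, smul_eq_mul]; ring
        rw [heq]
        calc ‖(1 - t) • ubar + t • u‖ ≤ ‖(1 - t) • ubar‖ + ‖t • u‖ := norm_add_le _ _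
          _ = (1 - t) * ‖ubar‖ + t * ‖u‖ := by
              rw [norm_smul, norm_smul, Real.norm_of_nonneg (by linarith),
                Real.norm_of_nonneg ht.le]
      rw [hJ, hJ, hKt] at hmin'
      have hexp : ‖a + t • b‖ ^ 2 = ‖a‖ ^ 2 + 2 * (t * ⟪a, b⟫) + t ^ 2 * ‖b‖ ^ 2 := by
        rw [norm_add_sq_real, real_inner_smul_right, norm_smul, mul_pow,
          Real.norm_of_nonneg ht.le]
      have hα0 := hα.le
      have h1 : (1/2 : ℝ) * ‖a‖ ^ 2 + α * ‖ubar‖ ≤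
          (1/2) * (‖a‖ ^ 2 + 2 * (t * ⟪a, b⟫) + t ^ 2 * ‖b‖ ^ 2)
            + α * ((1 - t) * ‖ubar‖ + t * ‖u‖) := by
        calc (1/2 : ℝ) * ‖a‖ ^ 2 + α * ‖ubar‖ ≤
            (1/2) * ‖a + t • b‖ ^ 2 + α * ‖ubar + t • (u - ubar)‖ := hmin'
          _ ≤ _ := by
              rw [hexp]
              have := mul_le_mul_of_nonneg_left hnorm hα0
              linarith
      have h2 : 0 ≤ t * (c + t * ‖b‖ ^ 2 / 2) := by
        rw [hcdef]; nlinarith [h1]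
      have h3 : 0 ≤ c + t * ‖b‖ ^ 2 / 2 := nonneg_of_mul_nonneg_right h2 ht
      linarith
    by_contra hcneg
    push_neg at hcneg
    have hb2 : (0:ℝ) < ‖b‖ ^ 2 + 1 := by positivity
    have hε : (0:ℝ) < -c := by linarith
    set t : ℝ := min 1 ((-c) / (‖b‖ ^ 2 + 1)) with htdef
    have ht0 : 0 < t := lt_min one_pos (div_pos hε hb2)
    have ht1 : t ≤ 1 := min_le_left _ _
    have := hstep t ht0 ht1
    have htle : t * ‖b‖ ^ 2 / 2 < -c := by
      have h4 : t ≤ (-c) / (‖b‖ ^ 2 + 1) := min_le_right _ _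
      have h5 : t * (‖b‖ ^ 2 + 1) ≤ -c := by
        rw [← le_div_iff₀ hb2]; exact h4
      nlinarith [sq_nonneg ‖b‖]
    linarith
  constructor
  · -- first inequality
    rw [hJ, hJ, hKu, norm_add_sq_real]
    linarith
  · -- second inequality
    have hu : u (Kstar d) = ⟪K u, d⟫ := (hadj u d).symm
    have hub : ubar (Kstar d) = ⟪K ubar, d⟫ := (hadj ubar d).symm
    -- lower bound on -2 α ‖ubar‖
    have hdual : -(‖ubar‖ * α) ≤ ⟪K ubar, d⟫ := by
      rw [← hub]
      have h1 : |ubar (Kstar d)| ≤ ‖ubar‖ * ‖Kstar d‖ := ubar.le_opNorm _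
      have h2 : ‖ubar‖ * ‖Kstar d‖ ≤ ‖ubar‖ * α :=
        mul_le_mul_of_nonneg_left hg (norm_nonneg _)
      have := abs_le.mp (h1.trans h2)
      linarith [this.1]
    rw [hJ, hJ, hu]
    have e1 : K u - gδ = (K u - g) + d := by rw [hd]; abel
    have e2 : K ubar - g = (K ubar - gδ) - d := by rw [hd]; abel
    have e3 : ‖K u - gδ‖ ^ 2 = ‖K u - g‖ ^ 2 + 2 * ⟪K u - g, d⟫ + ‖d‖ ^ 2 := by
      rw [e1, norm_add_sq_real]
    have e4 : ‖K ubar - g‖ ^ 2 =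
        ‖K ubar - gδ‖ ^ 2 - 2 * ⟪K ubar - gδ, d⟫ + ‖d‖ ^ 2 := by
      rw [e2, norm_sub_sq_real]
    have e5 : ⟪K u - g, d⟫ = ⟪K u, d⟫ - ⟪g, d⟫ := by rw [inner_sub_left]
    have e6 : ⟪K ubar - gδ, d⟫ = ⟪K ubar, d⟫ - ⟪gδ, d⟫ := by rw [inner_sub_left]
    have e7 : ⟪g, d⟫ = ⟪gδ, d⟫ + ‖d‖ ^ 2 := by
      have : g = gδ + d := by rw [hd]; abel
      rw [this, inner_add_left, real_inner_self_eq_norm_sq]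
    linarith [sq_nonneg ‖K ubar - g‖, e3, e4, e5, e6, e7, hdual]
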